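/- Let M be a set of finite sequences of natural numbers that are pairwise incomparable under the initial-segment relation (no element of M is a proper initial segment of another), let Ω_M be the set of finite sequences of the form η₀⌢⟨2n₀+1⟩⌢η₁⌢⟨2n₁+1⟩⌢⋯⌢⟨2n_{k−1}+1⟩⌢η_k with k ∈ ℕ, n₀,…,n_{k−1} ∈ ℕ and η₀,…,η_k ∈ M, and let Ω_M⁺ = {ν⌢⟨2n⟩ : ν ∈ Ω_M, n ∈ ℕ}. Then no element of Ω_M⁺ is a proper initial segment of another element of Ω_M⁺. Consequently, for any such M, the Hechler conditions (η, η⌢0^ω) for distinct η ∈ Ω_M⁺ are pairwise incompatible, i.e., {(η, η⌢0^ω) : η ∈ Ω_M⁺} is an antichain in 𝔻. -/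

import Mathlib

/-- A Hechler condition: a pair `(t, f)` where the function `f : ℕ → ℕ` extends
the finite sequence `t`. -/
def HCond (p : List ℕ × (ℕ → ℕ)) : Prop :=
  ∀ i < p.1.length, p.2 i = p.1.getD i 0

/-- The Hechler order: `(t, f) ≤ (t', f')` iff `t` is an initial segment of `t'`
and `f n ≤ f' n` for all `n`. -/
def HLe (p q : List ℕ × (ℕ → ℕ)) : Prop :=
  p.1 <+: q.1 ∧ ∀ n, p.2 n ≤ q.2 n

/-- Compatibility of Hechler conditions. -/
def HCompat (p q : List ℕ × (ℕ → ℕ)) : Prop :=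
  ∃ r, HCond r ∧ HLe p r ∧ HLe q r

/-- `t` is an initial segment of the function `x : ℕ → ℕ`. -/
def PrefixOf (t : List ℕ) (x : ℕ → ℕ) : Prop :=
  ∀ i < t.length, x i = t.getD i 0

/-- `set(p)`: the reals extending the trunk of `p` and dominating its side function. -/
def HSet (p : List ℕ × (ℕ → ℕ)) : Set (ℕ → ℕ) :=
  {x | PrefixOf p.1 x ∧ ∀ n, p.2 n ≤ x n}

/-- `X` is `𝔻`-nowhere dense. -/
def HNwd (X : Set (ℕ → ℕ)) : Prop :=
  ∀ p, HCond p → ∃ q, HCond q ∧ HLe p q ∧ HSet q ∩ X = ∅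

/-- The ideal `I_{𝔻,ℵ₀}`: sets covered by countably many `𝔻`-nowhere dense sets. -/
def HIdeal (X : Set (ℕ → ℕ)) : Prop :=
  ∃ B : ℕ → Set (ℕ → ℕ), (∀ n, HNwd (B n)) ∧ X ⊆ ⋃ n, B n



/-- The tree conditions (i)-(iii) on `Λ` from the definition of `Y_ε`. -/
def LamTree (Λ : Set (List ℕ)) : Prop :=
  Λ.Nonempty ∧
  (∀ ρ ∈ Λ, ∀ σ : List ℕ, σ <+: ρ → σ ∈ Λ) ∧
  (∀ ρ ∈ Λ, (∀ k : ℕ, ρ ++ [k] ∈ Λ) ∨ (∀ k : ℕ, ρ ++ [k] ∉ Λ)) ∧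
  (∀ ν₁ ν₂ : List ℕ, ν₁.length = ν₂.length → ν₁ ∈ Λ →
      (∀ l, ν₁.getD l 0 ≤ ν₂.getD l 0) → ν₂ ∈ Λ) ∧
  ¬ ∃ x : ℕ → ℕ, ∀ n : ℕ, (List.ofFn fun i : Fin n => x i) ∈ Λ

/-- The conditions on the rank function `h : Λ → ε + 1` from the definition of `Y_ε`. -/
def LamRank (ε : Ordinal) (Λ : Set (List ℕ)) (h : List ℕ → Ordinal) : Prop :=
  (∀ ρ ∈ Λ, h ρ ≤ ε) ∧
  h [] = ε ∧
  (∀ ρ₁ ∈ Λ, ∀ ρ₂ ∈ Λ, ρ₁ <+: ρ₂ → ρ₁ ≠ ρ₂ → h ρ₂ < h ρ₁) ∧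
  (∀ ρ ∈ Λ, ∀ ζ : Ordinal, h ρ = ζ + 1 → ∀ k : ℕ, ρ ++ [k] ∈ Λ → h (ρ ++ [k]) = ζ) ∧
  (∀ ρ ∈ Λ, Order.IsSuccLimit (h ρ) →
      ∀ β < h ρ, ∃ K : ℕ, ∀ k ≥ K, ρ ++ [k] ∈ Λ → β ≤ h (ρ ++ [k]))

/-- `(Λ, h) ∈ Y_ε`. -/
def MemY (ε : Ordinal) (Λ : Set (List ℕ)) (h : List ℕ → Ordinal) : Prop :=
  LamTree Λ ∧ LamRank ε Λ h

/-- `max(Λ)`: the elements of `Λ` with no proper extension in `Λ`. -/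
def maxLam (Λ : Set (List ℕ)) : Set (List ℕ) :=
  {ρ ∈ Λ | ∀ σ ∈ Λ, ρ <+: σ → σ = ρ}

/-- `Ω_M`: sequences of the form `η₀⌢⟨2n₀+1⟩⌢η₁⌢⟨2n₁+1⟩⌢⋯⌢η_k` with all `ηᵢ ∈ M`. -/
inductive InOmega (M : Set (List ℕ)) : List ℕ → Prop
  | base : ∀ η ∈ M, InOmega M η
  | step : ∀ ν, InOmega M ν → ∀ (n : ℕ), ∀ η ∈ M, InOmega M (ν ++ (2 * n + 1) :: η)

/-- `Ω_M⁺ = {ν⌢⟨2n⟩ : ν ∈ Ω_M, n ∈ ℕ}`. -/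
def OmegaPlus (M : Set (List ℕ)) : Set (List ℕ) :=
  {ρ | ∃ ν, InOmega M ν ∧ ∃ n : ℕ, ρ = ν ++ [2 * n]}

/-- `B_Λ`: the reals having no initial segment in `Ω_{max Λ}⁺`. -/
def BLam (Λ : Set (List ℕ)) : Set (ℕ → ℕ) :=
  {x | ∀ η ∈ OmegaPlus (maxLam Λ), ¬ PrefixOf η x}

/-- Head decomposition: every element of `Ω_M` is either in `M` or of the form
`η₀ ⌢ ⟨2k+1⟩ ⌢ a₂` with `η₀ ∈ M` and `a₂ ∈ Ω_M`. -/
private lemma InOmega.headDecomp {M : Set (List ℕ)} :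
    ∀ a, InOmega M a →
      a ∈ M ∨ ∃ η₀ ∈ M, ∃ k a₂, InOmega M a₂ ∧ a = η₀ ++ (2*k+1) :: a₂ := by
  intro a ha
  induction ha with
  | base η hη => exact Or.inl hη
  | step ν hν n η hη ih =>
    rcases ih with h | ⟨η₀, hη₀, k, a₂, ha₂, rfl⟩
    · exact Or.inr ⟨ν, h, n, η, .base η hη, rfl⟩
    · exact Or.inr ⟨η₀, hη₀, k, a₂ ++ (2*n+1) :: η, .step a₂ ha₂ n η hη, by simp⟩

private lemma keyC {M : Set (List ℕ)}
    (hM : ∀ η ∈ M, ∀ ν ∈ M, η <+: ν → η = ν) :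
    ∀ a, InOmega M a → ∀ b, InOmega M b → a <+: b →
      a = b ∨ ∃ k, a ++ [2*k+1] <+: b := by
  suffices H : ∀ n a, a.length = n → InOmega M a → ∀ b, InOmega M b → a <+: b →
      a = b ∨ ∃ k, a ++ [2*k+1] <+: b from fun a => H a.length a rfl
  intro n
  induction n using Nat.strong_induction_on with
  | _ n ih =>
    intro a hlen ha b hb hab
    rcases InOmega.headDecomp a ha with haM | ⟨η₀, hη₀, k, a₂, ha₂, rfl⟩
    · rcases InOmega.headDecomp b hb with hbM | ⟨η₀', hη₀', k', b₂, hb₂, rfl⟩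
      · exact Or.inl (hM a haM b hbM hab)
      · have h1 : η₀' <+: η₀' ++ (2*k'+1) :: b₂ := List.prefix_append _ _
        have heq : a = η₀' := by
          rcases List.prefix_or_prefix_of_prefix hab h1 with h | h
          · exact hM a haM η₀' hη₀' h
          · exact (hM η₀' hη₀' a haM h).symm
        subst heq
        refine Or.inr ⟨k', ?_⟩
        rw [show (2*k'+1) :: b₂ = [2*k'+1] ++ b₂ from rfl]
        exact (List.prefix_append_right_inj a).mpr (List.prefix_append _ _)
    · rcases InOmega.headDecomp b hb with hbM | ⟨η₀', hη₀', k', b₂, hb₂, rfl⟩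
      · have h1 : η₀ <+: b := (List.prefix_append _ _).trans hab
        have heq : η₀ = b := hM η₀ hη₀ b hbM h1
        subst heq
        have := hab.length_le
        simp at this
      · have hpa : η₀ <+: η₀' ++ (2*k'+1) :: b₂ := (List.prefix_append _ _).trans hab
        have hpb : η₀' <+: η₀' ++ (2*k'+1) :: b₂ := List.prefix_append _ _
        have heq : η₀ = η₀' := by
          rcases List.prefix_or_prefix_of_prefix hpa hpb with h | h
          · exact hM η₀ hη₀ η₀' hη₀' h
          · exact (hM η₀' hη₀' η₀ hη₀ h).symm
        subst heq
        have htl : (2*k+1) :: a₂ <+: (2*k'+1) :: b₂ :=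
          (List.prefix_append_right_inj η₀).mp hab
        rw [List.cons_prefix_cons] at htl
        obtain ⟨hkk, htl⟩ := htl
        have hkk' : k = k' := by omega
        subst hkk'
        have hlt : a₂.length < n := by
          subst hlen; simp; omega
        rcases ih a₂.length hlt a₂ rfl ha₂ b₂ hb₂ htl with rfl | ⟨j, hj⟩
        · exact Or.inl rfl
        · refine Or.inr ⟨j, ?_⟩
          rw [show η₀ ++ (2*k+1) :: a₂ ++ [2*j+1] = η₀ ++ (2*k+1) :: (a₂ ++ [2*j+1]) by simp]
          exact (List.prefix_append_right_inj η₀).mpr (List.cons_prefix_cons.mpr ⟨rfl, hj⟩)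

private lemma keyPlus {M : Set (List ℕ)}
    (hM : ∀ η ∈ M, ∀ ν ∈ M, η <+: ν → η = ν) :
    ∀ η ∈ OmegaPlus M, ∀ ν ∈ OmegaPlus M, η <+: ν → η = ν := by
  rintro η ⟨a, ha, m, rfl⟩ ν ⟨b, hb, n, rfl⟩ hpre
  rcases eq_or_lt_of_le hpre.length_le with heq | hlt
  · exact hpre.eq_of_length heq
  · exfalso
    have hb' : b <+: b ++ [2*n] := List.prefix_append _ _
    have h1 : a ++ [2*m] <+: b := by
      refine List.prefix_of_prefix_length_le hpre hb' ?_
      simp at hlt ⊢; omega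
    have h2 : a <+: b := (List.prefix_append _ _).trans h1
    rcases keyC hM a ha b hb h2 with rfl | ⟨j, hj⟩
    · have := h1.length_le; simp at this
    · have hlen : (a ++ [2*m]).length = (a ++ [2*j+1]).length := by simp
      have : a ++ [2*m] = a ++ [2*j+1] :=
        (List.prefix_of_prefix_length_le h1 hj hlen.le).eq_of_length hlen
      have := List.append_cancel_left this
      simp at this
      omega

/-- If `M` is a set of pairwise `⊑`-incomparable finite sequences,
then no element of `Ω_M⁺` is a proper initial segment of another, and consequently
`{(η, η⌢0^ω) : η ∈ Ω_M⁺}` is an antichain in Hechler forcing. -/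
theorem OmegaPlus_antichain
    (M : Set (List ℕ))
    (hM : ∀ η ∈ M, ∀ ν ∈ M, η <+: ν → η = ν) :
    (∀ η ∈ OmegaPlus M, ∀ ν ∈ OmegaPlus M, η <+: ν → η = ν) ∧
    (∀ η ∈ OmegaPlus M, ∀ ν ∈ OmegaPlus M, η ≠ ν →
      ¬ HCompat (η, fun n => η.getD n 0) (ν, fun n => ν.getD n 0)) := by
  refine ⟨keyPlus hM, ?_⟩
  rintro η hη ν hν hne ⟨r, -, ⟨h1, -⟩, ⟨h2, -⟩⟩
  rcases List.prefix_or_prefix_of_prefix h1 h2 with h | h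
  · exact hne (keyPlus hM η hη ν hν h)
  · exact hne (keyPlus hM ν hν η hη h).symm
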